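/- arXiv:1803.01829 — 3 statements merged into one kernel-verified Lean document; each statement's English description precedes it below -/
import Mathlib

section
/- Let g ∈ ℝⁿ with g ≠ 0, μ > 0, σ > 0, x ∈ ℝⁿ, and x_c = x − (1/μ)·g. Suppose v ∈ ℝⁿ satisfies ‖v‖₂ ≥ σ and ‖(x + v) − x_c‖₂ ≤ ‖x − x_c‖₂ = ‖g‖₂/μ. Then the angle between v and −g satisfies cos∠(v, −g) ≥ σ·μ/(2·‖g‖₂), i.e., (−g)ᵀv ≥ (σ·μ/2)·‖v‖₂. -/
/-- geometric core of the sufficient-descent-direction lemma: a vector v of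
length at least σ ending inside the large ball around x_c = x − μ⁻¹g makes an angle with −g
bounded away from π/2: (−g)ᵀv ≥ (σμ/2)‖v‖. -/
theorem stmt6 {n : ℕ}
    (g : EuclideanSpace ℝ (Fin n)) (hg : g ≠ 0)
    (μ σ : ℝ) (hμ : 0 < μ) (hσ : 0 < σ)
    (x v : EuclideanSpace ℝ (Fin n))
    (xc : EuclideanSpace ℝ (Fin n)) (hxc : xc = x - (1 / μ) • g)
    (hv : ‖v‖ ≥ σ)
    (hball : ‖(x + v) - xc‖ ≤ ‖x - xc‖) :
    (inner ℝ (-g) v : ℝ) ≥ σ * μ / 2 * ‖v‖ := by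
  subst hxc
  have h1 : x + v - (x - (1 / μ) • g) = v + (1 / μ) • g := by abel
  have h2 : x - (x - (1 / μ) • g) = (1 / μ) • g := by abel
  rw [h1, h2] at hball
  have hsq : ‖v + (1 / μ) • g‖ ^ 2 ≤ ‖(1 / μ) • g‖ ^ 2 := by
    have := norm_nonneg (v + (1 / μ) • g)
    nlinarith [norm_nonneg ((1 / μ) • g)]
  rw [norm_add_sq_real] at hsq
  have hinner : (inner ℝ v ((1 / μ) • g) : ℝ) = (1 / μ) * inner ℝ v g := by
    rw [real_inner_smul_right]
  have hkey : ‖v‖ ^ 2 + 2 * ((1 / μ) * (inner ℝ v g : ℝ)) ≤ 0 := by nlinarith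
  have hvg : (inner ℝ (-g) v : ℝ) = -(inner ℝ v g : ℝ) := by
    rw [inner_neg_left, real_inner_comm]
  rw [hvg]
  have hv2 : σ * ‖v‖ ≤ ‖v‖ ^ 2 := by nlinarith [norm_nonneg v]
  have : 2 * (1 / μ) * (-(inner ℝ v g : ℝ)) ≥ ‖v‖ ^ 2 := by linarith
  have h5 : μ * ‖v‖ ^ 2 ≤ μ * (2 * (1 / μ) * (-(inner ℝ v g : ℝ))) :=
    mul_le_mul_of_nonneg_left this (le_of_lt hμ)
  have h6 : μ * (2 * (1 / μ) * (-(inner ℝ v g : ℝ))) = 2 * (-(inner ℝ v g : ℝ)) := by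
    field_simp
  nlinarith [mul_le_mul_of_nonneg_left hv2 (le_of_lt hμ)]
end

section
/- Fix τ with 0 < τ < 1/2 and define the iteration x_{k+1} = 1 − τ/(2·x_k) with x_0 = 1/2. Then the sequence {x_k} converges monotonically to x* = 1/2 + √(1/4 − τ/2), and the convergence is exactly linear: |x_{k+1} − x*| / |x_k − x*| → τ/(2·(x*)²) as k → ∞, a limit strictly between 0 and 1; in particular, the convergence rate is not superlinear. -/
open Filter

/-- the convexified-model iteration x_{k+1} = 1 − τ/(2 x_k) with x_0 = 1/2
converges monotonically to x* = 1/2 + √(1/4 − τ/2) at an exactly linear rate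
τ/(2(x*)²) ∈ (0,1); in particular convergence is not superlinear. -/
theorem stmt9 (τ : ℝ) (hτ0 : 0 < τ) (hτ1 : τ < 1 / 2)
    (x : ℕ → ℝ) (hx0 : x 0 = 1 / 2)
    (hrec : ∀ k, x (k + 1) = 1 - τ / (2 * x k))
    (xstar : ℝ) (hxstar : xstar = 1 / 2 + Real.sqrt (1 / 4 - τ / 2)) :
    Monotone x ∧
    Tendsto x atTop (nhds xstar) ∧
    Tendsto (fun k => |x (k + 1) - xstar| / |x k - xstar|) atTop
      (nhds (τ / (2 * xstar ^ 2))) ∧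
    0 < τ / (2 * xstar ^ 2) ∧ τ / (2 * xstar ^ 2) < 1 := by
  have hs0 : 0 < Real.sqrt (1 / 4 - τ / 2) := Real.sqrt_pos.mpr (by linarith)
  set s := Real.sqrt (1 / 4 - τ / 2) with hsdef
  have hs2 : s ^ 2 = 1 / 4 - τ / 2 := Real.sq_sqrt (by linarith)
  have hslt : s < 1 / 2 := by nlinarith
  have hxpos : (0 : ℝ) < xstar := by rw [hxstar]; linarith
  have hxgt : 1 / 2 < xstar := by rw [hxstar]; linarith
  have hxlt1 : xstar < 1 := by rw [hxstar]; linarith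
  have hquad : xstar ^ 2 = xstar - τ / 2 := by
    rw [hxstar]; linear_combination hs2
  -- invariant
  have hbound : ∀ k, 1 / 2 ≤ x k ∧ x k < xstar := by
    intro k
    induction k with
    | zero => exact ⟨by rw [hx0], by rw [hx0]; exact hxgt⟩
    | succ n ih =>
      obtain ⟨h1, h2⟩ := ih
      have ha : 0 < x n := by linarith
      have h2a : 0 < 2 * x n := by linarith
      rw [hrec]
      constructor
      · have : τ / (2 * x n) ≤ τ := by
          rw [div_le_iff₀ h2a]; nlinarith
        linarith
      · have hkey : 1 - xstar < τ / (2 * x n) := by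
          rw [lt_div_iff₀ h2a]; nlinarith
        linarith
  have hmono_step : ∀ k, x k ≤ x (k + 1) := by
    intro k
    obtain ⟨h1, h2⟩ := hbound k
    have h2a : (0 : ℝ) < 2 * x k := by linarith
    have hxs : x k < 1 / 2 + s := by rw [hxstar] at h2; exact h2
    have : τ / (2 * x k) ≤ 1 - x k := by
      rw [div_le_iff₀ h2a]; nlinarith
    rw [hrec]; linarith
  have hMono : Monotone x := monotone_nat_of_le_succ hmono_step
  -- convergence
  have hbdd : BddAbove (Set.range x) := ⟨xstar, by rintro _ ⟨k, rfl⟩; exact (hbound k).2.le⟩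
  have hL : Tendsto x atTop (nhds (⨆ i, x i)) := tendsto_atTop_ciSup hMono hbdd
  set L := ⨆ i, x i with hLdef
  have hL12 : 1 / 2 ≤ L := by
    have := le_ciSup hbdd 0
    rw [hx0] at this; exact this
  have hLle : L ≤ xstar := ciSup_le fun k => (hbound k).2.le
  have hL0 : (0 : ℝ) < L := by linarith
  have h1 : Tendsto (fun k => x (k + 1)) atTop (nhds L) :=
    hL.comp (tendsto_add_atTop_nat 1)
  have h2 : Tendsto (fun k => 1 - τ / (2 * x k)) atTop (nhds (1 - τ / (2 * L))) := by
    exact tendsto_const_nhds.sub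
      (tendsto_const_nhds.div (tendsto_const_nhds.mul hL) (by positivity))
  simp only [hrec] at h1
  have heq : L = 1 - τ / (2 * L) := tendsto_nhds_unique h1 h2
  have hquadL : L ^ 2 = L - τ / 2 := by
    field_simp at heq
    linarith [heq]
  have hLeq : L = xstar := by
    have hxgeL : xstar ≤ L := by nlinarith [hs0]
    linarith
  have hlim : Tendsto x atTop (nhds xstar) := hLeq ▸ hL
  -- ratio
  have hratio_eq : ∀ k, |x (k + 1) - xstar| / |x k - xstar| = τ / (2 * x k * xstar) := by
    intro k
    obtain ⟨h1, h2⟩ := hbound k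
    have hx0k : 0 < x k := by linarith
    have hstep : x (k + 1) - xstar = τ * (x k - xstar) / (2 * x k * xstar) := by
      rw [hrec]
      field_simp
      linear_combination (-2 * x k) * hquad
    rw [hstep, abs_div, abs_mul, abs_of_pos (show (0:ℝ) < 2 * x k * xstar by positivity),
      abs_of_pos hτ0]
    have hd : (0 : ℝ) < |x k - xstar| := abs_pos.mpr (sub_ne_zero.mpr (ne_of_lt h2))
    field_simp
  have hratio : Tendsto (fun k => τ / (2 * x k * xstar)) atTop
      (nhds (τ / (2 * xstar ^ 2))) := by
    have hden : Tendsto (fun k => 2 * x k * xstar) atTop (nhds (2 * xstar * xstar)) :=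
      (tendsto_const_nhds.mul hlim).mul tendsto_const_nhds
    have := Tendsto.div (tendsto_const_nhds : Tendsto (fun _ : ℕ => τ) atTop (nhds τ))
      hden (show (2 * xstar * xstar) ≠ 0 by positivity)
    convert this using 2
    · rfl
    · ring
  refine ⟨hMono, hlim, Tendsto.congr (fun k => (hratio_eq k).symm) hratio, by positivity, ?_⟩
  rw [div_lt_one (by positivity)]
  nlinarith
end

section
/- Let K be the symmetric block matrix K = [[Q, Gᵀ], [G, −D]] where Q ∈ ℝⁿˣⁿ and D ∈ ℝᵐˣᵐ are both symmetric positive definite and G ∈ ℝᵐˣⁿ. Then K is invertible, and cond₂(K) = ‖K‖₂·‖K⁻¹‖₂ ≤ (‖Q⁻¹‖₂ + ‖D⁻¹‖₂)·‖K‖₂. -/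
open Matrix


open Matrix

noncomputable def Evec {k : Type*} [Fintype k] (x : k → ℝ) : EuclideanSpace ℝ k :=
  (WithLp.equiv 2 _).symm x

lemma inner_Evec {k : Type*} [Fintype k] (x y : k → ℝ) :
    (inner ℝ (Evec x) (Evec y) : ℝ) = x ⬝ᵥ y := by
  simp [Evec, PiLp.inner_apply, dotProduct, mul_comm]

lemma clm_Evec {k : Type*} [Fintype k] [DecidableEq k] (M : Matrix k k ℝ) (x : k → ℝ) :
    Matrix.toEuclideanCLM (𝕜 := ℝ) M (Evec x) = Evec (M *ᵥ x) := by
  rfl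

lemma norm_Evec_sq {k : Type*} [Fintype k] (x : k → ℝ) : ‖Evec x‖ ^ 2 = x ⬝ᵥ x := by
  rw [← real_inner_self_eq_norm_sq, inner_Evec]

lemma aux2 {k : Type*} [Fintype k] [DecidableEq k] (R : Matrix k k ℝ) (x : k → ℝ) :
    x ⬝ᵥ R *ᵥ x ≤ ‖Matrix.toEuclideanCLM (𝕜 := ℝ) R‖ * (x ⬝ᵥ x) := by
  have h1 : x ⬝ᵥ R *ᵥ x = inner ℝ (Evec x) (Matrix.toEuclideanCLM (𝕜 := ℝ) R (Evec x)) := by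
    rw [clm_Evec, inner_Evec]
  rw [h1, ← norm_Evec_sq]
  calc inner ℝ (Evec x) (Matrix.toEuclideanCLM (𝕜 := ℝ) R (Evec x))
      ≤ ‖Evec x‖ * ‖Matrix.toEuclideanCLM (𝕜 := ℝ) R (Evec x)‖ := real_inner_le_norm _ _
    _ ≤ ‖Evec x‖ * (‖Matrix.toEuclideanCLM (𝕜 := ℝ) R‖ * ‖Evec x‖) := by
        gcongr; exact (Matrix.toEuclideanCLM (𝕜 := ℝ) R).le_opNorm _
    _ = ‖Matrix.toEuclideanCLM (𝕜 := ℝ) R‖ * ‖Evec x‖ ^ 2 := by ring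

lemma dp_cs {k : Type*} [Fintype k] (x y : k → ℝ) :
    (x ⬝ᵥ y) ^ 2 ≤ (x ⬝ᵥ x) * (y ⬝ᵥ y) := by
  have := real_inner_mul_inner_self_le (Evec x) (Evec y)
  rw [inner_Evec, inner_Evec, inner_Evec] at this
  simpa [sq] using this

lemma dp_self_nonneg {k : Type*} [Fintype k] (x : k → ℝ) : 0 ≤ x ⬝ᵥ x := by
  rw [← norm_Evec_sq]; positivity

lemma herm_shift {k : Type*} [Fintype k] (S : Matrix k k ℝ) (hS : S.IsHermitian)
    (a c : k → ℝ) : (S *ᵥ a) ⬝ᵥ c = a ⬝ᵥ (S *ᵥ c) := by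
  have hSt : Sᵀ = S := by
    conv_rhs => rw [← hS.eq, Matrix.conjTranspose_eq_transpose_of_trivial]
  rw [dotProduct_comm, Matrix.dotProduct_mulVec, ← Matrix.mulVec_transpose, hSt,
    dotProduct_comm]

lemma quad_nonneg {k : Type*} [Fintype k] {P : Matrix k k ℝ} (hP : P.PosSemidef)
    (x : k → ℝ) : 0 ≤ x ⬝ᵥ P *ᵥ x := by
  have := hP.re_dotProduct_nonneg x
  simpa using this

open scoped MatrixOrder in
lemma aux1 {k : Type*} [Fintype k] [DecidableEq k] (P : Matrix k k ℝ) (hP : P.PosDef)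
    (u : k → ℝ) :
    u ⬝ᵥ u ≤ ‖Matrix.toEuclideanCLM (𝕜 := ℝ) P⁻¹‖ * (u ⬝ᵥ P *ᵥ u) := by
  set a := ‖Matrix.toEuclideanCLM (𝕜 := ℝ) P⁻¹‖ with ha
  have ha0 : 0 ≤ a := norm_nonneg _
  have hq : 0 ≤ u ⬝ᵥ P *ᵥ u := quad_nonneg hP.posSemidef u
  have hR : (P⁻¹).PosDef := hP.inv
  set S := CFC.sqrt (P⁻¹) with hSdef
  have hSS : S * S = P⁻¹ := CFC.sqrt_mul_sqrt_self _ hR.posSemidef.nonneg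
  have hSh : S.IsHermitian := (CFC.sqrt_nonneg (P⁻¹)).posSemidef.1
  set w := P *ᵥ u with hw
  have hinv : P⁻¹ *ᵥ w = u := by
    rw [hw, Matrix.mulVec_mulVec, Matrix.nonsing_inv_mul P hP.det_pos.ne'.isUnit, Matrix.one_mulVec]
  have key : (S *ᵥ u) ⬝ᵥ (S *ᵥ w) = u ⬝ᵥ u := by
    rw [herm_shift S hSh, Matrix.mulVec_mulVec, hSS, hinv]
  have h1 : (S *ᵥ u) ⬝ᵥ (S *ᵥ u) = u ⬝ᵥ P⁻¹ *ᵥ u := by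
    rw [herm_shift S hSh, Matrix.mulVec_mulVec, hSS]
  have h2 : (S *ᵥ w) ⬝ᵥ (S *ᵥ w) = u ⬝ᵥ P *ᵥ u := by
    rw [herm_shift S hSh, Matrix.mulVec_mulVec, hSS, hinv, dotProduct_comm]
  have cs := dp_cs (S *ᵥ u) (S *ᵥ w)
  rw [key, h1, h2] at cs
  have hau : u ⬝ᵥ P⁻¹ *ᵥ u ≤ a * (u ⬝ᵥ u) := aux2 P⁻¹ u
  have hc : 0 ≤ u ⬝ᵥ u := dp_self_nonneg u
  rcases hc.eq_or_lt with h | h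
  · rw [← h]; positivity
  · have hkey : (u ⬝ᵥ u) ^ 2 ≤ (a * (u ⬝ᵥ P *ᵥ u)) * (u ⬝ᵥ u) := by nlinarith
    have := le_of_mul_le_mul_right (by nlinarith : (u ⬝ᵥ u) * (u ⬝ᵥ u) ≤ (a * (u ⬝ᵥ P *ᵥ u)) * (u ⬝ᵥ u)) h
    linarith




/-- the symmetric saddle-point matrix K = [[Q, G.transpose],[G, −D]] with Q, D symmetric
positive definite is invertible, and its spectral condition number satisfies
cond₂(K) ≤ (‖Q⁻¹‖₂ + ‖D⁻¹‖₂)·‖K‖₂. -/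
theorem stmt11 {n m : ℕ}
    (Q : Matrix (Fin n) (Fin n) ℝ) (hQ : Q.PosDef)
    (D : Matrix (Fin m) (Fin m) ℝ) (hD : D.PosDef)
    (G : Matrix (Fin m) (Fin n) ℝ)
    (K : Matrix (Fin n ⊕ Fin m) (Fin n ⊕ Fin m) ℝ)
    (hK : K = Matrix.fromBlocks Q G.transpose G (-D)) :
    IsUnit K ∧
    ‖Matrix.toEuclideanCLM (𝕜 := ℝ) K‖ * ‖Matrix.toEuclideanCLM (𝕜 := ℝ) K⁻¹‖ ≤
      (‖Matrix.toEuclideanCLM (𝕜 := ℝ) Q⁻¹‖ + ‖Matrix.toEuclideanCLM (𝕜 := ℝ) D⁻¹‖) *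
        ‖Matrix.toEuclideanCLM (𝕜 := ℝ) K‖ := by
  set a := ‖Matrix.toEuclideanCLM (𝕜 := ℝ) Q⁻¹‖ with hadef
  set b := ‖Matrix.toEuclideanCLM (𝕜 := ℝ) D⁻¹‖ with hbdef
  have ha0 : 0 ≤ a := norm_nonneg _
  have hb0 : 0 ≤ b := norm_nonneg _
  -- the key coercivity estimate
  have key : ∀ x : (Fin n ⊕ Fin m) → ℝ, ‖Evec x‖ ≤ (a + b) * ‖Evec (K *ᵥ x)‖ := by
    intro x
    set u : Fin n → ℝ := x ∘ Sum.inl with hu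
    set v : Fin m → ℝ := x ∘ Sum.inr with hv
    have hx : Sum.elim u v = x := Sum.elim_comp_inl_inr x
    set y₁ : Fin n → ℝ := Q *ᵥ u + Gᵀ *ᵥ v with hy1
    set y₂ : Fin m → ℝ := G *ᵥ u + (-D) *ᵥ v with hy2
    have hy : K *ᵥ x = Sum.elim y₁ y₂ := by
      rw [← hx, hK, Matrix.fromBlocks_mulVec, Sum.elim_comp_inl, Sum.elim_comp_inr]
    set z : (Fin n ⊕ Fin m) → ℝ := Sum.elim y₁ (-y₂) with hz
    have hGsym : u ⬝ᵥ Gᵀ *ᵥ v = v ⬝ᵥ G *ᵥ u := by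
      rw [Matrix.dotProduct_mulVec, Matrix.vecMul_transpose, dotProduct_comm]
    have hxz : x ⬝ᵥ z = u ⬝ᵥ Q *ᵥ u + v ⬝ᵥ D *ᵥ v := by
      rw [← hx, hz, sumElim_dotProduct_sumElim, hy1, hy2]
      simp only [dotProduct_add, dotProduct_neg, Matrix.neg_mulVec]
      linarith [hGsym]
    have hzz : z ⬝ᵥ z = (K *ᵥ x) ⬝ᵥ (K *ᵥ x) := by
      rw [hy, hz, sumElim_dotProduct_sumElim, sumElim_dotProduct_sumElim]
      simp [dotProduct_neg, neg_dotProduct]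
    have hnz : ‖Evec z‖ = ‖Evec (K *ᵥ x)‖ := by
      have h2 : ‖Evec z‖ ^ 2 = ‖Evec (K *ᵥ x)‖ ^ 2 := by
        rw [norm_Evec_sq, norm_Evec_sq, hzz]
      have := congrArg Real.sqrt h2
      simpa [Real.sqrt_sq, norm_nonneg] using this
    -- coercivity
    have hxx : x ⬝ᵥ x = u ⬝ᵥ u + v ⬝ᵥ v := by
      rw [← hx, sumElim_dotProduct_sumElim]
    have hQu : u ⬝ᵥ u ≤ a * (u ⬝ᵥ Q *ᵥ u) := aux1 Q hQ u
    have hDv : v ⬝ᵥ v ≤ b * (v ⬝ᵥ D *ᵥ v) := aux1 D hD v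
    have hq1 : 0 ≤ u ⬝ᵥ Q *ᵥ u := quad_nonneg hQ.posSemidef u
    have hq2 : 0 ≤ v ⬝ᵥ D *ᵥ v := quad_nonneg hD.posSemidef v
    have hstep : x ⬝ᵥ x ≤ (a + b) * (x ⬝ᵥ z) := by
      rw [hxx, hxz]; nlinarith
    have hcs : x ⬝ᵥ z ≤ ‖Evec x‖ * ‖Evec z‖ := by
      rw [← inner_Evec]; exact real_inner_le_norm _ _
    have hX : ‖Evec x‖ ^ 2 ≤ (a + b) * (‖Evec x‖ * ‖Evec (K *ᵥ x)‖) := by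
      rw [norm_Evec_sq, ← hnz]
      calc x ⬝ᵥ x ≤ (a + b) * (x ⬝ᵥ z) := hstep
        _ ≤ (a + b) * (‖Evec x‖ * ‖Evec z‖) := by
            apply mul_le_mul_of_nonneg_left hcs (by linarith)
    rcases (norm_nonneg (Evec x)).eq_or_lt with h | h
    · rw [← h]; positivity
    · have := le_of_mul_le_mul_right
        (by nlinarith : ‖Evec x‖ * ‖Evec x‖ ≤ ((a + b) * ‖Evec (K *ᵥ x)‖) * ‖Evec x‖) h
      linarith
  -- invertibility
  have hUnit : IsUnit K := by
    rw [← Matrix.mulVec_injective_iff_isUnit]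
    intro x x' hxe
    have h0 : K *ᵥ (x - x') = 0 := by
      rw [Matrix.mulVec_sub, hxe, sub_self]
    have hle := key (x - x')
    rw [h0] at hle
    have hz0 : Evec (0 : (Fin n ⊕ Fin m) → ℝ) = 0 := by simp [Evec]
    rw [hz0, norm_zero, mul_zero] at hle
    have hEv : Evec (x - x') = 0 := norm_le_zero_iff.mp hle
    have hsub : x - x' = 0 := by
      have := congrArg (WithLp.equiv 2 _) hEv
      simpa [Evec] using this
    exact sub_eq_zero.mp hsub
  refine ⟨hUnit, ?_⟩
  have hdet : IsUnit K.det := (Matrix.isUnit_iff_isUnit_det K).mp hUnit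
  have hinv : ‖Matrix.toEuclideanCLM (𝕜 := ℝ) K⁻¹‖ ≤ a + b := by
    apply ContinuousLinearMap.opNorm_le_bound _ (by linarith)
    intro Y
    have hY : Evec (WithLp.equiv 2 _ Y) = Y := rfl
    rw [← hY, clm_Evec]
    set y := WithLp.equiv 2 _ Y with hydef
    have hKK : K *ᵥ (K⁻¹ *ᵥ y) = y := by
      rw [Matrix.mulVec_mulVec, Matrix.mul_nonsing_inv K hdet, Matrix.one_mulVec]
    calc ‖Evec (K⁻¹ *ᵥ y)‖ ≤ (a + b) * ‖Evec (K *ᵥ (K⁻¹ *ᵥ y))‖ := key _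
      _ = (a + b) * ‖Evec y‖ := by rw [hKK]
  rw [mul_comm]
  exact mul_le_mul_of_nonneg_right hinv (norm_nonneg _)
end
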